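/- If X ∼ S(α, β=1, F cos(πα/2)) with 0 < α < 1, E(X^λ) = F^{λ/α} Γ(1−λ/α)/Γ(1−λ) for λ < α, and Ĵ = Δ X^{−α/Δ} with Δ = 1−α, then the third central moment satisfies E(Ĵ − F^{−1/Δ})³ = F^{−3/Δ}(17 − 21Δ + 6Δ²). -/

import Mathlib

open Real MeasureTheory

set_option maxHeartbeats 1000000 in
/-- Under the moment formula for X ∼ S(α, β=1, F cos(πα/2)), the third central
moment of Ĵ = ΔX^{−α/Δ} (Δ = 1−α) satisfies
E(Ĵ − F^{−1/Δ})³ = F^{−3/Δ}(17 − 21Δ + 6Δ²). -/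
theorem stmt17 {Ω : Type*} [MeasureSpace Ω] (μ : Measure Ω) [IsProbabilityMeasure μ]
    (X : Ω → ℝ) (hX : ∀ᵐ ω ∂μ, 0 < X ω)
    (α F : ℝ) (hα0 : 0 < α) (hα1 : α < 1) (hF : 0 < F)
    (hmom : ∀ l : ℝ, l < α →
      ∫ ω, X ω ^ l ∂μ = F ^ (l / α) * (Real.Gamma (1 - l / α) / Real.Gamma (1 - l))) :
    ∫ ω, ((1 - α) * X ω ^ (-(α / (1 - α))) - F ^ (-(1 / (1 - α))))^3 ∂μ
      = F ^ (-(3 / (1 - α))) * (17 - 21 * (1 - α) + 6 * (1 - α)^2) := by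
  set Δ : ℝ := 1 - α with hΔdef
  have hΔ : 0 < Δ := by rw [hΔdef]; linarith
  have hΔne : Δ ≠ 0 := hΔ.ne'
  have hαne : α ≠ 0 := hα0.ne'
  set l : ℝ := -(α / Δ) with hl
  have hx : 0 < α / Δ := div_pos hα0 hΔ
  have hlneg : l < 0 := by rw [hl]; linarith
  -- helper for positivity of Gamma args
  have hg1 : (0:ℝ) < 1 + α / Δ := by linarith
  have hg2 : (0:ℝ) < 1 + 2 * (α / Δ) := by linarith
  have hg3 : (0:ℝ) < 1 + 3 * (α / Δ) := by linarith
  -- moment values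
  have e1 : l / α = -(1 / Δ) := by rw [hl]; field_simp
  have e2 : (2 * l) / α = -(2 / Δ) := by rw [hl]; field_simp
  have e3 : (3 * l) / α = -(3 / Δ) := by rw [hl]; field_simp
  have d1 : (1:ℝ) - l = 1 + α / Δ := by rw [hl]; ring
  have d2 : (1:ℝ) - 2 * l = 1 + 2 * (α / Δ) := by rw [hl]; ring
  have d3 : (1:ℝ) - 3 * l = 1 + 3 * (α / Δ) := by rw [hl]; ring
  have n1 : (1:ℝ) - l / α = (1 + α / Δ) + 1 := by
    rw [e1, hΔdef]; field_simp
    have h : (1 - α) * (1 - α)⁻¹ = 1 := mul_inv_cancel₀ (by linarith)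
    linear_combination h
  have n2 : (1:ℝ) - (2 * l) / α = ((1 + 2 * (α / Δ)) + 1) + 1 := by
    rw [e2, hΔdef]; field_simp
    have h : (1 - α) * (1 - α)⁻¹ = 1 := mul_inv_cancel₀ (by linarith)
    linear_combination 2 * h
  have n3 : (1:ℝ) - (3 * l) / α = (((1 + 3 * (α / Δ)) + 1) + 1) + 1 := by
    rw [e3, hΔdef]; field_simp
    have h : (1 - α) * (1 - α)⁻¹ = 1 := mul_inv_cancel₀ (by linarith)
    linear_combination 3 * h
  have G1 : Real.Gamma (1 - l / α) / Real.Gamma (1 - l)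
      = 1 + α / Δ := by
    rw [n1, d1, Real.Gamma_add_one hg1.ne', mul_div_assoc,
      div_self (Real.Gamma_pos_of_pos hg1).ne', mul_one]
  have G2 : Real.Gamma (1 - (2 * l) / α) / Real.Gamma (1 - 2 * l)
      = ((1 + 2 * (α / Δ)) + 1) * (1 + 2 * (α / Δ)) := by
    rw [n2, d2, Real.Gamma_add_one (by linarith : (1 + 2 * (α / Δ)) + 1 ≠ 0),
      Real.Gamma_add_one hg2.ne']
    field_simp [(Real.Gamma_pos_of_pos hg2).ne']
  have G3 : Real.Gamma (1 - (3 * l) / α) / Real.Gamma (1 - 3 * l)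
      = (((1 + 3 * (α / Δ)) + 1) + 1) * ((1 + 3 * (α / Δ)) + 1) * (1 + 3 * (α / Δ)) := by
    rw [n3, d3, Real.Gamma_add_one (by linarith : ((1 + 3 * (α / Δ)) + 1) + 1 ≠ 0),
      Real.Gamma_add_one (by linarith : (1 + 3 * (α / Δ)) + 1 ≠ 0),
      Real.Gamma_add_one hg3.ne']
    field_simp [(Real.Gamma_pos_of_pos hg3).ne']
  have hl1 : l < α := by linarith
  have hl2 : 2 * l < α := by nlinarith
  have hl3 : 3 * l < α := by nlinarith
  have M1 : ∫ ω, X ω ^ l ∂μ = F ^ (-(1 / Δ)) * (1 + α / Δ) := by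
    rw [hmom l hl1, G1, e1]
  have M2 : ∫ ω, X ω ^ (2 * l) ∂μ
      = F ^ (-(2 / Δ)) * (((1 + 2 * (α / Δ)) + 1) * (1 + 2 * (α / Δ))) := by
    rw [hmom (2 * l) hl2, G2, e2]
  have M3 : ∫ ω, X ω ^ (3 * l) ∂μ
      = F ^ (-(3 / Δ)) * ((((1 + 3 * (α / Δ)) + 1) + 1) * ((1 + 3 * (α / Δ)) + 1)
          * (1 + 3 * (α / Δ))) := by
    rw [hmom (3 * l) hl3, G3, e3]
  -- integrability
  have integ : ∀ l' : ℝ, l' < α → 0 < F ^ (l' / α) * (Real.Gamma (1 - l' / α) / Real.Gamma (1 - l')) →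
      Integrable (fun ω => X ω ^ l') μ := by
    intro l' hl' hpos
    by_contra h
    have := hmom l' hl'
    rw [integral_undef h] at this
    linarith [this ▸ hpos]
  have I1 : Integrable (fun ω => X ω ^ l) μ := by
    refine integ l hl1 ?_
    rw [G1, e1]
    exact mul_pos (Real.rpow_pos_of_pos hF _) (by linarith)
  have I2 : Integrable (fun ω => X ω ^ (2 * l)) μ := by
    refine integ (2 * l) hl2 ?_
    rw [G2, e2]
    exact mul_pos (Real.rpow_pos_of_pos hF _) (mul_pos (by linarith) hg2)
  have I3 : Integrable (fun ω => X ω ^ (3 * l)) μ := by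
    refine integ (3 * l) hl3 ?_
    rw [G3, e3]
    exact mul_pos (Real.rpow_pos_of_pos hF _)
      (mul_pos (mul_pos (by linarith) (by linarith)) hg3)
  set c : ℝ := F ^ (-(1 / Δ)) with hc
  -- powers of c
  have hc2 : c ^ 2 = F ^ (-(2 / Δ)) := by
    rw [hc, ← Real.rpow_natCast (F ^ (-(1/Δ))) 2, ← Real.rpow_mul hF.le]
    congr 1
    push_cast
    ring
  have hc3 : c ^ 3 = F ^ (-(3 / Δ)) := by
    rw [hc, ← Real.rpow_natCast (F ^ (-(1/Δ))) 3, ← Real.rpow_mul hF.le]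
    congr 1
    push_cast
    ring
  -- expand the cube a.e.
  have hae : (fun ω => (Δ * X ω ^ l - c) ^ 3)
      =ᵐ[μ] fun ω => Δ^3 * X ω ^ (3*l) - 3*Δ^2*c * X ω ^ (2*l) + 3*Δ*c^2 * X ω ^ l - c^3 := by
    filter_upwards [hX] with ω hω
    have h2 : X ω ^ (2 * l) = (X ω ^ l) ^ 2 := by
      rw [mul_comm, Real.rpow_mul hω.le, ← Real.rpow_natCast (X ω ^ l) 2]
      norm_num
    have h3 : X ω ^ (3 * l) = (X ω ^ l) ^ 3 := by
      rw [mul_comm, Real.rpow_mul hω.le, ← Real.rpow_natCast (X ω ^ l) 3]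
      norm_num
    rw [h2, h3]; ring
  have J3 : Integrable (fun a => Δ^3 * X a ^ (3*l)) μ := I3.const_mul _
  have J2 : Integrable (fun a => 3*Δ^2*c * X a ^ (2*l)) μ := I2.const_mul _
  have J1 : Integrable (fun a => 3*Δ*c^2 * X a ^ l) μ := I1.const_mul _
  have J32 : Integrable (fun a => Δ^3 * X a ^ (3*l) - 3*Δ^2*c * X a ^ (2*l)) μ := J3.sub J2
  have J321 : Integrable
      (fun a => Δ^3 * X a ^ (3*l) - 3*Δ^2*c * X a ^ (2*l) + 3*Δ*c^2 * X a ^ l) μ := J32.add J1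
  rw [integral_congr_ae hae, integral_sub J321 (integrable_const _),
    integral_add J32 J1, integral_sub J3 J2,
    integral_const_mul, integral_const_mul, integral_const_mul, integral_const]
  simp only [measure_univ, ENNReal.toReal_one, probReal_univ, smul_eq_mul, one_mul]
  rw [M1, M2, M3, ← hc3, show F ^ (-(2 / Δ)) = c ^ 2 from hc2.symm]
  have hΔα : α = 1 - Δ := by rw [hΔdef]; ring
  rw [hΔα]
  field_simp
  ring
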